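/- Fix a prime ℓ and n ≥ 0. Then the number of partitions of n equals Σ_{ν ∈ Part(n,ℓ)} ∏_{i≥0} p_ℓ(m_{ℓ^i}(ν)), where p_ℓ(m) denotes the number of ℓ-regular partitions of m. -/

import Mathlib

/-- A function `f : ℕ → ℕ` is a partition of `m` if it is weakly decreasing,
has finite support, and its parts sum to `m`.  Here `f i` is the `(i+1)`-st part
`λ_{i+1}` of the partition. -/
def IsPartition (m : ℕ) (f : ℕ → ℕ) : Prop :=
  Antitone f ∧ (Function.support f).Finite ∧ ∑ᶠ i, f i = m

/-- The transpose partition: `ptranspose f j` is the `(j+1)`-st part `(fᵗ)_{j+1}`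
of the transpose, i.e. the number of indices `i` with `f i ≥ j + 1`. -/
noncomputable def ptranspose (f : ℕ → ℕ) : ℕ → ℕ :=
  fun j => {i : ℕ | j + 1 ≤ f i}.ncard

/-- `pmult f j` is the multiplicity `m_j(f)` of `j ≥ 1` as a part of `f`. -/
noncomputable def pmult (f : ℕ → ℕ) (j : ℕ) : ℕ :=
  {i : ℕ | f i = j}.ncard

/-- All (nonzero) parts of `f` are powers of `ℓ`. -/
def PartsPowersOf (ℓ : ℕ) (f : ℕ → ℕ) : Prop :=
  ∀ i, f i ≠ 0 → ∃ k, f i = ℓ ^ k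

/-- `f` is `ℓ`-regular: every part `j ≥ 1` has multiplicity `< ℓ`. -/
def IsRegularPartition (ℓ : ℕ) (f : ℕ → ℕ) : Prop :=
  ∀ j, 1 ≤ j → pmult f j < ℓ

/-- The combinatorial generalized Springer map: given a tuple `lam` where `lam i`
is (meant to be) an `ℓ`-regular partition of `m_{ℓ^i}(ν)`, it returns the
partition `Σ_{i ≥ 0} ℓ^i · (lam i)ᵗ` (componentwise operations). -/
noncomputable def psiCo (ℓ : ℕ) (lam : ℕ → ℕ → ℕ) : ℕ → ℕ :=
  fun j => ∑ᶠ i, ℓ ^ i * ptranspose (lam i) j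

open Function Finset

/-- bound for a finite-support function on ℕ -/
lemma exists_bound {f : ℕ → ℕ} (hf : (support f).Finite) : ∃ N, ∀ i, N ≤ i → f i = 0 := by
  obtain ⟨B, hB⟩ := hf.bddAbove
  refine ⟨B + 1, fun i hi => ?_⟩
  by_contra h
  exact absurd (hB (show i ∈ support f from h)) (by omega)

lemma finsum_eq_range {f : ℕ → ℕ} {N : ℕ} (h : ∀ i, N ≤ i → f i = 0) :
    ∑ᶠ i, f i = ∑ i ∈ Finset.range N, f i := by
  apply finsum_eq_sum_of_support_subset
  intro i hi
  simp only [Finset.coe_range, Set.mem_Iio]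
  by_contra hc
  exact hi (h i (by omega))

lemma term_le_finsum {f : ℕ → ℕ} (hf : (support f).Finite) (i : ℕ) : f i ≤ ∑ᶠ j, f j := by
  obtain ⟨N, hN⟩ := exists_bound hf
  rw [finsum_eq_range (N := max N (i+1)) (fun k hk => hN k (le_trans (le_max_left _ _) hk))]
  exact Finset.single_le_sum (fun k _ => Nat.zero_le _) (Finset.mem_range.mpr (by omega))

lemma finsum_eq_zero_imp {f : ℕ → ℕ} (hf : (support f).Finite) (h : ∑ᶠ j, f j = 0) (i : ℕ) :
    f i = 0 := Nat.le_zero.mp (h ▸ term_le_finsum hf i)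

lemma setS_finite {f : ℕ → ℕ} (hf : (support f).Finite) (j : ℕ) :
    {i : ℕ | j + 1 ≤ f i}.Finite :=
  hf.subset (fun i hi => by simp only [Set.mem_setOf_eq] at hi; exact fun h0 => by omega)

/-- the key down-set lemma -/
lemma mem_iff_lt_ptranspose {f : ℕ → ℕ} (ha : Antitone f) (hf : (support f).Finite)
    (j i : ℕ) : j + 1 ≤ f i ↔ i < ptranspose f j := by
  have hS := setS_finite hf j
  constructor
  · intro h
    have hsub : Set.Iic i ⊆ {i' : ℕ | j + 1 ≤ f i'} := fun i' hi' =>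
      le_trans h (ha (Set.mem_Iic.mp hi'))
    have := Set.ncard_le_ncard hsub hS
    rwa [← Finset.coe_Iic, Set.ncard_coe_finset, Nat.card_Iic] at this
  · intro h
    by_contra hc
    have hsub : {i' : ℕ | j + 1 ≤ f i'} ⊆ Set.Iio i := by
      intro i' hi'
      simp only [Set.mem_setOf_eq] at hi'
      simp only [Set.mem_Iio]
      by_contra hc2
      exact hc (le_trans hi' (ha (by omega)))
    have := Set.ncard_le_ncard hsub (Set.finite_Iio i)
    rw [← Finset.coe_Iio, Set.ncard_coe_finset, Nat.card_Iio] at this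
    exact absurd h (by unfold ptranspose; omega)

lemma ptranspose_antitone {f : ℕ → ℕ} (hf : (support f).Finite) : Antitone (ptranspose f) := by
  intro a b hab
  exact Set.ncard_le_ncard (fun i hi => by simp only [Set.mem_setOf_eq] at *; omega)
    (setS_finite hf a)

lemma ptranspose_eq_zero {f : ℕ → ℕ} {B j : ℕ} (hB : ∀ i, f i ≤ B) (hj : B ≤ j) :
    ptranspose f j = 0 := by
  unfold ptranspose
  convert Set.ncard_empty ℕ
  ext i
  simp only [Set.mem_setOf_eq, Set.mem_empty_iff_false, iff_false]
  have := hB i; omega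

lemma ptranspose_support {f : ℕ → ℕ} (hf : (support f).Finite) :
    (support (ptranspose f)).Finite := by
  have hb : ∀ i, f i ≤ ∑ᶠ j, f j := term_le_finsum hf
  apply Set.Finite.subset (Set.finite_Iio (∑ᶠ j, f j))
  intro j hj
  simp only [Set.mem_Iio]
  by_contra h
  exact hj (ptranspose_eq_zero hb (by omega))

lemma ptranspose_ptranspose {f : ℕ → ℕ} (ha : Antitone f) (hf : (support f).Finite) :
    ptranspose (ptranspose f) = f := by
  funext i
  show ({j : ℕ | i + 1 ≤ ptranspose f j}).ncard = f i
  have : {j : ℕ | i + 1 ≤ ptranspose f j} = Set.Iio (f i) := by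
    ext j
    simp only [Set.mem_setOf_eq, Set.mem_Iio]
    rw [show i + 1 ≤ ptranspose f j ↔ i < ptranspose f j from Iff.rfl,
      ← mem_iff_lt_ptranspose ha hf]
    omega
  rw [this, ← Finset.coe_Iio, Set.ncard_coe_finset, Nat.card_Iio]

lemma pmult_add_ptranspose {f : ℕ → ℕ} (hf : (support f).Finite) (j : ℕ) :
    pmult f (j + 1) + ptranspose f (j + 1) = ptranspose f j := by
  unfold pmult ptranspose
  rw [← Set.ncard_union_eq ?_ ?_ ?_]
  · congr 1
    ext i
    simp only [Set.mem_union, Set.mem_setOf_eq]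
    omega
  · rw [Set.disjoint_left]; intro i h1 h2
    simp only [Set.mem_setOf_eq] at *; omega
  · exact hf.subset (fun i hi => by simp only [Set.mem_setOf_eq] at hi; exact fun h0 => by omega)
  · exact setS_finite hf (j+1)
noncomputable def mfun (f : ℕ → ℕ) : ℕ → ℕ := fun j => pmult f (j + 1)

lemma pmult_set_finite {f : ℕ → ℕ} (hf : (Function.support f).Finite) (j : ℕ) :
    {i : ℕ | f i = j + 1}.Finite :=
  hf.subset (fun i hi => by simp only [Set.mem_setOf_eq] at hi; exact fun h0 => by omega)

lemma mfun_support {f : ℕ → ℕ} (hf : (Function.support f).Finite) :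
    (Function.support (mfun f)).Finite := by
  apply Set.Finite.subset (hf.image (fun i => f i - 1))
  intro j hj
  obtain ⟨i, hi⟩ := Set.nonempty_of_ncard_ne_zero hj
  simp only [Set.mem_setOf_eq] at hi
  refine ⟨i, fun h0 => by omega, ?_⟩
  show f i - 1 = j
  omega

lemma pmult_eq_card_filter {f : ℕ → ℕ} {N : ℕ} (hN : ∀ i, N ≤ i → f i = 0) (j : ℕ) :
    pmult f (j + 1) = ((Finset.range N).filter (fun i => f i = j + 1)).card := by
  have hset : {i : ℕ | f i = j + 1} = ↑((Finset.range N).filter (fun i => f i = j + 1)) := by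
    ext i
    simp only [Set.mem_setOf_eq, Finset.coe_filter, Finset.mem_range]
    constructor
    · intro h
      refine ⟨?_, h⟩
      by_contra hc
      have := hN i (by omega); omega
    · exact fun h => h.2
  rw [pmult, hset, Set.ncard_coe_finset]

lemma size_eq_sum_mfun {f : ℕ → ℕ} (hf : (Function.support f).Finite) :
    ∑ᶠ i, f i = ∑ᶠ j, (j + 1) * mfun f j := by
  classical
  obtain ⟨N, hN⟩ := exists_bound hf
  set M := (∑ᶠ i, f i) + 1 with hM
  have hfi : ∀ i, f i < M := fun i => by
    have := term_le_finsum hf i; omega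
  have hmb : ∀ j, M ≤ j → (j + 1) * mfun f j = 0 := by
    intro j hj
    have : mfun f j = 0 := by
      by_contra hc
      obtain ⟨i, hi⟩ := Set.nonempty_of_ncard_ne_zero hc
      simp only [Set.mem_setOf_eq] at hi
      have := hfi i; omega
    simp [this]
  rw [finsum_eq_range hN, finsum_eq_range hmb]
  have step1 : ∀ i ∈ Finset.range N, f i = ∑ j ∈ Finset.range M, (if f i = j + 1 then j + 1 else 0) := by
    intro i _
    rcases Nat.eq_zero_or_pos (f i) with h0 | hpos
    · rw [h0]
      refine (Finset.sum_eq_zero ?_).symm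
      intro j _
      exact if_neg (by omega)
    · obtain ⟨w, hw⟩ : ∃ w, f i = w + 1 := ⟨f i - 1, by omega⟩
      have : ∀ j ∈ Finset.range M, (if f i = j + 1 then j + 1 else 0) = (if j = w then j + 1 else 0) := by
        intro j _
        exact if_congr (by omega) rfl rfl
      rw [Finset.sum_congr rfl this, Finset.sum_ite_eq' (Finset.range M) w (fun j => j + 1),
        if_pos (Finset.mem_range.mpr (by have := hfi i; omega))]
      omega
  rw [Finset.sum_congr rfl step1, Finset.sum_comm]
  apply Finset.sum_congr rfl
  intro j _
  rw [← Finset.sum_filter, Finset.sum_const, smul_eq_mul]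
  show _ = (j + 1) * pmult f (j + 1)
  rw [pmult_eq_card_filter hN]
  exact Nat.mul_comm _ _

noncomputable def tailSum (e : ℕ → ℕ) : ℕ → ℕ := fun j => ∑ᶠ t, e (j + t)

lemma tailSum_eq_range {e : ℕ → ℕ} {N : ℕ} (hN : ∀ k, N ≤ k → e k = 0) (j : ℕ) :
    tailSum e j = ∑ t ∈ Finset.range N, e (j + t) :=
  finsum_eq_range (fun t ht => hN (j + t) (by omega))

lemma tailSum_rec {e : ℕ → ℕ} (he : (Function.support e).Finite) (j : ℕ) :
    tailSum e j = e j + tailSum e (j + 1) := by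
  obtain ⟨N, hN⟩ := exists_bound he
  rw [tailSum_eq_range (N := N + 1) (fun k hk => hN k (by omega)) j,
    tailSum_eq_range hN (j + 1), Finset.sum_range_succ']
  simp only [Nat.add_zero]
  rw [Nat.add_comm]
  congr 1
  apply Finset.sum_congr rfl
  intro t _
  congr 1
  omega

lemma tailSum_antitone {e : ℕ → ℕ} (he : (Function.support e).Finite) :
    Antitone (tailSum e) := by
  apply antitone_nat_of_succ_le
  intro j
  rw [tailSum_rec he j]
  omega

lemma tailSum_zero_of_ge {e : ℕ → ℕ} {N : ℕ} (hN : ∀ k, N ≤ k → e k = 0) {j : ℕ}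
    (hj : N ≤ j) : tailSum e j = 0 := by
  rw [tailSum_eq_range hN]
  exact Finset.sum_eq_zero (fun t _ => hN (j + t) (by omega))

lemma tailSum_support {e : ℕ → ℕ} (he : (Function.support e).Finite) :
    (Function.support (tailSum e)).Finite := by
  obtain ⟨N, hN⟩ := exists_bound he
  apply Set.Finite.subset (Set.finite_Iio N)
  intro j hj
  simp only [Set.mem_Iio]
  by_contra h
  exact hj (tailSum_zero_of_ge hN (by omega))

noncomputable def build (e : ℕ → ℕ) : ℕ → ℕ := ptranspose (tailSum e)

lemma build_antitone {e : ℕ → ℕ} (he : (Function.support e).Finite) : Antitone (build e) :=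
  ptranspose_antitone (tailSum_support he)

lemma build_support {e : ℕ → ℕ} (he : (Function.support e).Finite) :
    (Function.support (build e)).Finite :=
  ptranspose_support (tailSum_support he)

lemma mfun_build {e : ℕ → ℕ} (he : (Function.support e).Finite) : mfun (build e) = e := by
  funext j
  have h1 := pmult_add_ptranspose (build_support he) j
  have h2 : ptranspose (build e) = tailSum e :=
    ptranspose_ptranspose (tailSum_antitone he) (tailSum_support he)
  rw [h2] at h1
  have h3 := tailSum_rec he j
  show pmult (build e) (j + 1) = e j
  omega

lemma rec_unique {a g h : ℕ → ℕ} (hg : ∀ j, g j = a j + g (j + 1))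
    (hh : ∀ j, h j = a j + h (j + 1)) {N : ℕ} (hgN : ∀ j, N ≤ j → g j = 0)
    (hhN : ∀ j, N ≤ j → h j = 0) : g = h := by
  have key : ∀ k j, N ≤ j + k → g j = h j := by
    intro k
    induction k with
    | zero => intro j hj; rw [hgN j (by omega), hhN j (by omega)]
    | succ k ih =>
      intro j hj
      by_cases hc : N ≤ j
      · rw [hgN j hc, hhN j hc]
      · rw [hg j, hh j, ih (j + 1) (by omega)]
  funext j
  exact key N j (by omega)

lemma build_mfun {f : ℕ → ℕ} (ha : Antitone f) (hf : (Function.support f).Finite) :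
    build (mfun f) = f := by
  have hm := mfun_support hf
  have key : tailSum (mfun f) = ptranspose f := by
    obtain ⟨N1, hN1⟩ := exists_bound hm
    have hb : ∀ i, f i ≤ ∑ᶠ j, f j := term_le_finsum hf
    apply rec_unique (a := mfun f)
    · exact tailSum_rec hm
    · intro j
      have := pmult_add_ptranspose hf j
      show ptranspose f j = pmult f (j + 1) + ptranspose f (j + 1)
      omega
    · exact fun j hj => tailSum_zero_of_ge hN1 (le_trans (Nat.le_max_left N1 (∑ᶠ i, f i)) hj)
    · exact fun j hj => ptranspose_eq_zero hb (le_trans (Nat.le_max_right N1 (∑ᶠ i, f i)) hj)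
  unfold build
  rw [key]
  exact ptranspose_ptranspose ha hf

lemma weighted_support {e : ℕ → ℕ} (he : (Function.support e).Finite) :
    (Function.support (fun j => (j + 1) * e j)).Finite :=
  he.subset (fun j hj => by
    simp only [Function.mem_support] at *
    intro h0; apply hj; rw [h0, Nat.mul_zero])

lemma build_size {e : ℕ → ℕ} (he : (Function.support e).Finite) :
    ∑ᶠ i, build e i = ∑ᶠ j, (j + 1) * e j := by
  rw [size_eq_sum_mfun (build_support he), mfun_build he]

noncomputable def partEquiv (m : ℕ) :
    {f : ℕ → ℕ // IsPartition m f} ≃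
      {e : ℕ → ℕ // (Function.support e).Finite ∧ ∑ᶠ j, (j + 1) * e j = m} where
  toFun f := ⟨mfun f.1, mfun_support f.2.2.1, by rw [← size_eq_sum_mfun f.2.2.1]; exact f.2.2.2⟩
  invFun e := ⟨build e.1, build_antitone e.2.1, build_support e.2.1,
    by rw [build_size e.2.1]; exact e.2.2⟩
  left_inv f := Subtype.ext (build_mfun f.2.1 f.2.2.1)
  right_inv e := Subtype.ext (mfun_build e.2.1)

noncomputable def regEquiv (ℓ m : ℕ) :
    {f : ℕ → ℕ // IsPartition m f ∧ IsRegularPartition ℓ f} ≃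
      {e : ℕ → ℕ // (∀ j, e j < ℓ) ∧ (Function.support e).Finite ∧ ∑ᶠ j, (j + 1) * e j = m} where
  toFun f := ⟨mfun f.1, fun j => f.2.2 (j + 1) (by omega), mfun_support f.2.1.2.1,
    by rw [← size_eq_sum_mfun f.2.1.2.1]; exact f.2.1.2.2⟩
  invFun e := ⟨build e.1,
    ⟨build_antitone e.2.2.1, build_support e.2.2.1, by rw [build_size e.2.2.1]; exact e.2.2.2⟩,
    by
      intro j hj
      obtain ⟨j', rfl⟩ : ∃ j', j = j' + 1 := ⟨j - 1, by omega⟩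
      show pmult (build e.1) (j' + 1) < ℓ
      have := congrFun (mfun_build e.2.2.1) j'
      rw [show mfun (build e.1) j' = pmult (build e.1) (j' + 1) from rfl] at this
      rw [this]
      exact e.2.1 j'⟩
  left_inv f := Subtype.ext (build_mfun f.2.1.1 f.2.1.2.1)
  right_inv e := Subtype.ext (mfun_build e.2.2.1)
lemma finsum_eq_finset {f : ℕ → ℕ} {s : Finset ℕ} (h : ∀ i, i ∉ s → f i = 0) :
    ∑ᶠ i, f i = ∑ i ∈ s, f i := by
  apply finsum_eq_sum_of_support_subset
  intro i hi
  by_contra hc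
  exact hi (h i hc)

open Classical in
noncomputable def spread (ℓ : ℕ) (m : ℕ → ℕ) : ℕ → ℕ :=
  fun j => if h : ∃ i, ℓ ^ i = j + 1 then m h.choose else 0

lemma pow_pred_inj {ℓ : ℕ} (hl : 2 ≤ ℓ) {a b : ℕ} (h : ℓ ^ a - 1 = ℓ ^ b - 1) : a = b := by
  have ha : 1 ≤ ℓ ^ a := Nat.one_le_pow _ _ (by omega)
  have hb : 1 ≤ ℓ ^ b := Nat.one_le_pow _ _ (by omega)
  have h2 : ℓ ^ a = ℓ ^ b := by omega
  exact Nat.pow_right_injective hl h2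

lemma spread_pow {ℓ : ℕ} (hl : 2 ≤ ℓ) (m : ℕ → ℕ) (i : ℕ) :
    spread ℓ m (ℓ ^ i - 1) = m i := by
  have hp : 1 ≤ ℓ ^ i := Nat.one_le_pow _ _ (by omega)
  have h : ∃ i', ℓ ^ i' = (ℓ ^ i - 1) + 1 := ⟨i, by omega⟩
  rw [spread]
  rw [dif_pos h]
  congr 1
  have h2 : ℓ ^ h.choose = ℓ ^ i := by have := h.choose_spec; omega
  exact Nat.pow_right_injective hl h2

lemma spread_support (ℓ : ℕ) (m : ℕ → ℕ) :
    Function.support (spread ℓ m) ⊆ (fun i => ℓ ^ i - 1) '' Function.support m := by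
  intro j hj
  simp only [Function.mem_support, spread] at hj
  by_cases h : ∃ i, ℓ ^ i = j + 1
  · rw [dif_pos h] at hj
    refine ⟨h.choose, hj, ?_⟩
    show ℓ ^ h.choose - 1 = j
    have := h.choose_spec; omega
  · rw [dif_neg h] at hj; exact absurd rfl hj

lemma spread_support_finite (ℓ : ℕ) {m : ℕ → ℕ} (hm : (Function.support m).Finite) :
    (Function.support (spread ℓ m)).Finite :=
  (hm.image _).subset (spread_support ℓ m)

lemma spread_sum {ℓ : ℕ} (hl : 2 ≤ ℓ) {m : ℕ → ℕ} (hm : (Function.support m).Finite) :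
    ∑ᶠ j, (j + 1) * spread ℓ m j = ∑ᶠ i, ℓ ^ i * m i := by
  classical
  obtain ⟨N, hN⟩ := exists_bound hm
  have hr : ∑ᶠ i, ℓ ^ i * m i = ∑ i ∈ Finset.range N, ℓ ^ i * m i :=
    finsum_eq_range (fun i hi => by rw [hN i hi, Nat.mul_zero])
  set T := (Finset.range N).image (fun i => ℓ ^ i - 1) with hT
  have hleft : ∑ᶠ j, (j + 1) * spread ℓ m j = ∑ j ∈ T, (j + 1) * spread ℓ m j := by
    apply finsum_eq_finset
    intro j hj
    rcases Nat.eq_zero_or_pos (spread ℓ m j) with h0 | hpos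
    · rw [h0, Nat.mul_zero]
    · exfalso
      have hjs := spread_support ℓ m (show j ∈ Function.support (spread ℓ m) by
        simp only [Function.mem_support]; omega)
      obtain ⟨i, hi, hij⟩ := hjs
      apply hj
      rw [hT]
      apply Finset.mem_image.mpr
      refine ⟨i, Finset.mem_range.mpr ?_, hij⟩
      by_contra hc
      exact hi (hN i (by omega))
  rw [hleft, hr, hT, Finset.sum_image (fun a _ b _ h => pow_pred_inj hl h)]
  apply Finset.sum_congr rfl
  intro i _
  have hp : 1 ≤ ℓ ^ i := Nat.one_le_pow _ _ (by omega)
  rw [spread_pow hl]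
  congr 1
  omega

lemma spread_eq_mfun {ℓ : ℕ} {g : ℕ → ℕ} (hg : (Function.support g).Finite)
    (hpow : PartsPowersOf ℓ g) :
    spread ℓ (fun i => pmult g (ℓ ^ i)) = mfun g := by
  funext j
  by_cases h : ∃ i, ℓ ^ i = j + 1
  · rw [spread, dif_pos h]
    show pmult g (ℓ ^ h.choose) = mfun g j
    rw [h.choose_spec]
    rfl
  · rw [spread, dif_neg h]
    show (0 : ℕ) = pmult g (j + 1)
    by_contra hc
    obtain ⟨i, hi⟩ := Set.nonempty_of_ncard_ne_zero (fun hh => hc hh.symm)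
    simp only [Set.mem_setOf_eq] at hi
    obtain ⟨k, hk⟩ := hpow i (by omega)
    exact h ⟨k, by omega⟩

lemma pmult_pow_eq {ℓ : ℕ} (hl : 2 ≤ ℓ) (g : ℕ → ℕ) :
    (fun i => pmult g (ℓ ^ i)) = (fun i => mfun g (ℓ ^ i - 1)) := by
  funext i
  have hp : 1 ≤ ℓ ^ i := Nat.one_le_pow _ _ (by omega)
  show pmult g (ℓ ^ i) = pmult g ((ℓ ^ i - 1) + 1)
  congr 1
  omega

lemma pmult_pow_support {ℓ : ℕ} (hl : 2 ≤ ℓ) {g : ℕ → ℕ}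
    (hg : (Function.support g).Finite) :
    (Function.support (fun i => pmult g (ℓ ^ i))).Finite := by
  rw [pmult_pow_eq hl]
  have : Function.support (fun i => mfun g (ℓ ^ i - 1)) =
      (fun i => ℓ ^ i - 1) ⁻¹' (Function.support (mfun g)) := rfl
  rw [this]
  exact Set.Finite.preimage (fun a _ b _ h => pow_pred_inj hl h) (mfun_support hg)

noncomputable def powersEquiv (ℓ n : ℕ) (hl : 2 ≤ ℓ) :
    {g : ℕ → ℕ // IsPartition n g ∧ PartsPowersOf ℓ g} ≃
      {m : ℕ → ℕ // (Function.support m).Finite ∧ ∑ᶠ i, ℓ ^ i * m i = n} where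
  toFun g := ⟨fun i => pmult g.1 (ℓ ^ i), pmult_pow_support hl g.2.1.2.1, by
    rw [← spread_sum hl (pmult_pow_support hl g.2.1.2.1),
      spread_eq_mfun g.2.1.2.1 g.2.2, ← size_eq_sum_mfun g.2.1.2.1]
    exact g.2.1.2.2⟩
  invFun m := ⟨build (spread ℓ m.1),
    ⟨build_antitone (spread_support_finite ℓ m.2.1), build_support (spread_support_finite ℓ m.2.1),
      by rw [build_size (spread_support_finite ℓ m.2.1), spread_sum hl m.2.1]; exact m.2.2⟩,
    by
      intro i hi
      set v := build (spread ℓ m.1) i with hv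
      have hfin := pmult_set_finite (build_support (spread_support_finite ℓ m.2.1)) (v - 1)
      have hne : pmult (build (spread ℓ m.1)) ((v - 1) + 1) ≠ 0 := by
        show {i' : ℕ | build (spread ℓ m.1) i' = (v - 1) + 1}.ncard ≠ 0
        have hmem : i ∈ {i' : ℕ | build (spread ℓ m.1) i' = (v - 1) + 1} := by
          simp only [Set.mem_setOf_eq]; omega
        have hpos := (Set.ncard_pos hfin).mpr ⟨i, hmem⟩
        omega
      have hval : pmult (build (spread ℓ m.1)) ((v - 1) + 1) = spread ℓ m.1 (v - 1) :=
        congrFun (mfun_build (spread_support_finite ℓ m.2.1)) (v - 1)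
      rw [hval] at hne
      rw [spread] at hne
      by_cases h : ∃ i', ℓ ^ i' = (v - 1) + 1
      · exact ⟨h.choose, by have := h.choose_spec; omega⟩
      · rw [dif_neg h] at hne; exact absurd rfl hne⟩
  left_inv g := Subtype.ext (by
    show build (spread ℓ (fun i => pmult g.1 (ℓ ^ i))) = g.1
    rw [spread_eq_mfun g.2.1.2.1 g.2.2]
    exact build_mfun g.2.1.1 g.2.1.2.1)
  right_inv m := Subtype.ext (by
    funext i
    have hp : 1 ≤ ℓ ^ i := Nat.one_le_pow _ _ (by omega)
    show pmult (build (spread ℓ m.1)) (ℓ ^ i) = m.1 i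
    have h1 : pmult (build (spread ℓ m.1)) ((ℓ ^ i - 1) + 1) = spread ℓ m.1 (ℓ ^ i - 1) :=
      congrFun (mfun_build (spread_support_finite ℓ m.2.1)) (ℓ ^ i - 1)
    rw [show ℓ ^ i = (ℓ ^ i - 1) + 1 by omega, h1, spread_pow hl])
lemma exists_ne_zero_of_finsum {f : ℕ → ℕ} (h : ∑ᶠ x, f x ≠ 0) : ∃ x, f x ≠ 0 := by
  by_contra hc
  push_neg at hc
  exact h (by rw [show f = fun _ => 0 from funext hc]; exact finsum_zero)

lemma finite_bound {S : Set ℕ} (hS : S.Finite) : ∃ J, ∀ x ∈ S, x < J := by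
  obtain ⟨B, hB⟩ := hS.bddAbove
  exact ⟨B + 1, fun x hx => by have := hB hx; omega⟩

lemma digits_partial_lt {ℓ : ℕ} (hl : 2 ≤ ℓ) {d : ℕ → ℕ} (hd : ∀ i, d i < ℓ) (k : ℕ) :
    ∑ i ∈ Finset.range k, ℓ ^ i * d i < ℓ ^ k := by
  induction k with
  | zero => simp
  | succ k ih =>
    rw [Finset.sum_range_succ, pow_succ]
    have h2 : ℓ ^ k * d k ≤ ℓ ^ k * (ℓ - 1) := Nat.mul_le_mul_left _ (by have := hd k; omega)
    have h3 : ℓ ^ k * (ℓ - 1) = ℓ ^ k * ℓ - ℓ ^ k := by rw [Nat.mul_sub, Nat.mul_one]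
    have h4 : ℓ ^ k ≤ ℓ ^ k * ℓ := Nat.le_mul_of_pos_right _ (by omega)
    have h5 : 0 < ℓ ^ k := pow_pos (by omega) _
    omega

lemma digits_extract {ℓ : ℕ} (hl : 2 ≤ ℓ) :
    ∀ (k N : ℕ) (d : ℕ → ℕ), (∀ i, d i < ℓ) →
      (∑ i ∈ Finset.range N, ℓ ^ i * d i) / ℓ ^ k % ℓ = if k < N then d k else 0 := by
  intro k
  induction k with
  | zero =>
    intro N d hd
    rw [pow_zero, Nat.div_one]
    match N with
    | 0 => simp
    | N + 1 =>
      rw [Finset.sum_range_succ']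
      have hstep : ∀ i ∈ Finset.range N, ℓ ^ (i + 1) * d (i + 1) = ℓ * (ℓ ^ i * d (i + 1)) := by
        intro i _; rw [pow_succ]; ring
      rw [Finset.sum_congr rfl hstep, ← Finset.mul_sum, pow_zero, Nat.one_mul,
        Nat.mul_add_mod, Nat.mod_eq_of_lt (hd 0), if_pos (by omega)]
  | succ k ih =>
    intro N d hd
    match N with
    | 0 =>
      simp
    | N + 1 =>
      rw [Finset.sum_range_succ']
      have hstep : ∀ i ∈ Finset.range N, ℓ ^ (i + 1) * d (i + 1) = ℓ * (ℓ ^ i * d (i + 1)) := by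
        intro i _; rw [pow_succ]; ring
      rw [Finset.sum_congr rfl hstep, ← Finset.mul_sum, pow_zero, Nat.one_mul]
      rw [pow_succ' (M := ℕ), ← Nat.div_div_eq_div_mul]
      have hdiv : (ℓ * ∑ i ∈ Finset.range N, ℓ ^ i * d (i + 1) + d 0) / ℓ
          = ∑ i ∈ Finset.range N, ℓ ^ i * d (i + 1) := by
        rw [Nat.mul_add_div (by omega), Nat.div_eq_of_lt (hd 0), Nat.add_zero]
      rw [hdiv, ih N (fun i => d (i + 1)) (fun i => hd (i + 1))]
      by_cases h : k < N
      · rw [if_pos h, if_pos (by omega)]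
      · rw [if_neg h, if_neg (by omega)]

lemma digits_sum {ℓ : ℕ} (hl : 2 ≤ ℓ) :
    ∀ (N x : ℕ), x < ℓ ^ N → ∑ i ∈ Finset.range N, ℓ ^ i * (x / ℓ ^ i % ℓ) = x := by
  intro N
  induction N with
  | zero => intro x hx; rw [pow_zero] at hx; interval_cases x <;> simp
  | succ N ih =>
    intro x hx
    rw [Finset.sum_range_succ']
    have hstep : ∀ i ∈ Finset.range N, ℓ ^ (i + 1) * (x / ℓ ^ (i + 1) % ℓ)
        = ℓ * (ℓ ^ i * ((x / ℓ) / ℓ ^ i % ℓ)) := by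
      intro i _
      rw [pow_succ' (M := ℕ), ← Nat.div_div_eq_div_mul]
      ring
    rw [Finset.sum_congr rfl hstep, ← Finset.mul_sum, pow_zero, Nat.one_mul, Nat.div_one]
    have hx2 : x / ℓ < ℓ ^ N := by
      rw [Nat.div_lt_iff_lt_mul (by omega)]
      rw [pow_succ] at hx
      exact hx
    rw [ih (x / ℓ) hx2]
    exact Nat.div_add_mod x ℓ

noncomputable def dig (ℓ : ℕ) (e : ℕ → ℕ) : ℕ → ℕ → ℕ := fun i j => e j / ℓ ^ i % ℓ

noncomputable def msize (ℓ : ℕ) (e : ℕ → ℕ) : ℕ → ℕ := fun i => ∑ᶠ j, (j + 1) * dig ℓ e i j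

noncomputable def unDig (ℓ : ℕ) (d : ℕ → ℕ → ℕ) : ℕ → ℕ := fun j => ∑ᶠ i, ℓ ^ i * d i j

def DigOK (ℓ : ℕ) (m : ℕ → ℕ) (d : ℕ → ℕ → ℕ) : Prop :=
  (∀ i j, d i j < ℓ) ∧ (∀ i, (Function.support (d i)).Finite) ∧
    (∀ i, ∑ᶠ j, (j + 1) * d i j = m i)

lemma n_lt_pow {ℓ n : ℕ} (hl : 2 ≤ ℓ) : n < ℓ ^ (n + 1) := by
  have h1 : n < 2 ^ (n + 1) := lt_of_lt_of_le (Nat.lt_two_pow_self (n := n)) (Nat.pow_le_pow_right (by omega) (by omega))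
  exact lt_of_lt_of_le h1 (Nat.pow_le_pow_left hl _)

lemma e_le_of_sum {e : ℕ → ℕ} {n : ℕ} (he : (Function.support e).Finite)
    (hs : ∑ᶠ j, (j + 1) * e j = n) (j : ℕ) : e j ≤ n := by
  have h1 : (j + 1) * e j ≤ ∑ᶠ j', (j' + 1) * e j' := term_le_finsum (weighted_support he) j
  have h2 : e j ≤ (j + 1) * e j := Nat.le_mul_of_pos_left _ (by omega)
  omega

lemma dig_lt {ℓ : ℕ} (hl : 2 ≤ ℓ) (e : ℕ → ℕ) (i j : ℕ) : dig ℓ e i j < ℓ :=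
  Nat.mod_lt _ (by omega)

lemma dig_zero {ℓ : ℕ} {e : ℕ → ℕ} {i j : ℕ} (h : e j < ℓ ^ i) : dig ℓ e i j = 0 := by
  rw [dig, Nat.div_eq_of_lt h, Nat.zero_mod]

lemma dig_support {ℓ : ℕ} {e : ℕ → ℕ} (he : (Function.support e).Finite) (i : ℕ) :
    (Function.support (dig ℓ e i)).Finite := by
  apply he.subset
  intro j hj
  simp only [Function.mem_support] at *
  intro h0
  exact hj (by rw [dig, h0, Nat.zero_div, Nat.zero_mod])

lemma dig_zero_of_large {ℓ n : ℕ} (hl : 2 ≤ ℓ) {e : ℕ → ℕ}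
    (he : (Function.support e).Finite) (hs : ∑ᶠ j, (j + 1) * e j = n) {i : ℕ}
    (hi : n + 1 ≤ i) (j : ℕ) : dig ℓ e i j = 0 := by
  apply dig_zero
  have h1 : e j ≤ n := e_le_of_sum he hs j
  have h2 : n < ℓ ^ (n + 1) := n_lt_pow hl
  have h3 : ℓ ^ (n + 1) ≤ ℓ ^ i := Nat.pow_le_pow_right (by omega) hi
  omega

lemma e_eq_digits {ℓ n : ℕ} (hl : 2 ≤ ℓ) {e : ℕ → ℕ} (he : (Function.support e).Finite)
    (hs : ∑ᶠ j, (j + 1) * e j = n) (j : ℕ) :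
    ∑ i ∈ Finset.range (n + 1), ℓ ^ i * dig ℓ e i j = e j := by
  apply digits_sum hl
  have h1 : e j ≤ n := e_le_of_sum he hs j
  have h2 : n < ℓ ^ (n + 1) := n_lt_pow hl
  omega

lemma msize_support {ℓ n : ℕ} (hl : 2 ≤ ℓ) {e : ℕ → ℕ} (he : (Function.support e).Finite)
    (hs : ∑ᶠ j, (j + 1) * e j = n) :
    ∀ i, n + 1 ≤ i → msize ℓ e i = 0 := by
  intro i hi
  rw [msize]
  have : ∀ j : ℕ, (j + 1) * dig ℓ e i j = 0 := by
    intro j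
    rw [dig_zero_of_large hl he hs hi j, Nat.mul_zero]
  rw [show (fun j => (j + 1) * dig ℓ e i j) = fun _ => 0 from funext this]
  exact finsum_zero

lemma msize_sum {ℓ n : ℕ} (hl : 2 ≤ ℓ) {e : ℕ → ℕ} (he : (Function.support e).Finite)
    (hs : ∑ᶠ j, (j + 1) * e j = n) : ∑ᶠ i, ℓ ^ i * msize ℓ e i = n := by
  obtain ⟨J, hJ⟩ := exists_bound he
  have h1 : ∑ᶠ i, ℓ ^ i * msize ℓ e i = ∑ i ∈ Finset.range (n + 1), ℓ ^ i * msize ℓ e i :=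
    finsum_eq_range (fun i hi => by rw [msize_support hl he hs i hi, Nat.mul_zero])
  have h2 : ∀ i, msize ℓ e i = ∑ j ∈ Finset.range J, (j + 1) * dig ℓ e i j := by
    intro i
    apply finsum_eq_range
    intro j hj
    have : e j = 0 := hJ j hj
    rw [dig, this, Nat.zero_div, Nat.zero_mod, Nat.mul_zero]
  rw [h1]
  calc ∑ i ∈ Finset.range (n + 1), ℓ ^ i * msize ℓ e i
      = ∑ i ∈ Finset.range (n + 1), ∑ j ∈ Finset.range J, ℓ ^ i * ((j + 1) * dig ℓ e i j) := by
        apply Finset.sum_congr rfl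
        intro i _
        rw [h2 i, Finset.mul_sum]
    _ = ∑ j ∈ Finset.range J, ∑ i ∈ Finset.range (n + 1), (j + 1) * (ℓ ^ i * dig ℓ e i j) := by
        rw [Finset.sum_comm]
        apply Finset.sum_congr rfl; intro j _
        apply Finset.sum_congr rfl; intro i _
        ring
    _ = ∑ j ∈ Finset.range J, (j + 1) * e j := by
        apply Finset.sum_congr rfl
        intro j _
        rw [← Finset.mul_sum, e_eq_digits hl he hs j]
    _ = n := by rw [← finsum_eq_range (fun j hj => by rw [hJ j hj, Nat.mul_zero])]; exact hs

lemma digok_dzero {ℓ : ℕ} {m : ℕ → ℕ} {d : ℕ → ℕ → ℕ} (hd : DigOK ℓ m d) {i : ℕ}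
    (hm : m i = 0) (j : ℕ) : d i j = 0 := by
  have h1 := hd.2.2 i
  rw [hm] at h1
  have h2 : (j + 1) * d i j = 0 := finsum_eq_zero_imp (weighted_support (hd.2.1 i)) h1 j
  exact (Nat.mul_eq_zero.mp h2).resolve_left (by omega)

lemma unDig_bounds {ℓ : ℕ} {m : ℕ → ℕ} (hm : (Function.support m).Finite)
    {d : ℕ → ℕ → ℕ} (hd : DigOK ℓ m d) :
    ∃ I J, (∀ i, I ≤ i → m i = 0) ∧ (∀ i j, J ≤ j → d i j = 0) ∧
      (∀ i j, I ≤ i → d i j = 0) := by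
  obtain ⟨I, hI⟩ := exists_bound hm
  obtain ⟨J, hJ'⟩ := finite_bound (Set.Finite.biUnion hm (fun i _ => hd.2.1 i))
  refine ⟨I, J, hI, ?_, fun i j hi => digok_dzero hd (hI i hi) j⟩
  intro i j hj
  by_cases hmi : m i = 0
  · exact digok_dzero hd hmi j
  · by_contra hc
    have hmem : j ∈ ⋃ i ∈ Function.support m, Function.support (d i) :=
      Set.mem_biUnion hmi hc
    have := hJ' j hmem
    omega

lemma unDig_eq_range {ℓ : ℕ} {d : ℕ → ℕ → ℕ} {I : ℕ} (hIe : ∀ i j, I ≤ i → d i j = 0)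
    (j : ℕ) : unDig ℓ d j = ∑ i ∈ Finset.range I, ℓ ^ i * d i j :=
  finsum_eq_range (fun i hi => by rw [hIe i j hi, Nat.mul_zero])

lemma unDig_support {ℓ n : ℕ} {m : ℕ → ℕ} (hm : (Function.support m).Finite)
    (hms : ∑ᶠ i, ℓ ^ i * m i = n) {d : ℕ → ℕ → ℕ} (hd : DigOK ℓ m d) :
    (Function.support (unDig ℓ d)).Finite ∧ ∑ᶠ j, (j + 1) * unDig ℓ d j = n := by
  obtain ⟨I, J, hI, hJ, hIe⟩ := unDig_bounds hm hd
  have hzero : ∀ j, J ≤ j → unDig ℓ d j = 0 := by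
    intro j hj
    rw [unDig_eq_range hIe]
    exact Finset.sum_eq_zero (fun i _ => by rw [hJ i j hj, Nat.mul_zero])
  constructor
  · apply (Set.finite_Iio J).subset
    intro j hj
    simp only [Set.mem_Iio]
    by_contra h
    exact hj (hzero j (by omega))
  · rw [finsum_eq_range (N := J) (fun j hj => by rw [hzero j hj, Nat.mul_zero])]
    calc ∑ j ∈ Finset.range J, (j + 1) * unDig ℓ d j
        = ∑ j ∈ Finset.range J, ∑ i ∈ Finset.range I, ℓ ^ i * ((j + 1) * d i j) := by
          apply Finset.sum_congr rfl
          intro j _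
          rw [unDig_eq_range hIe, Finset.mul_sum]
          apply Finset.sum_congr rfl
          intro i _
          ring
      _ = ∑ i ∈ Finset.range I, ℓ ^ i * m i := by
          rw [Finset.sum_comm]
          apply Finset.sum_congr rfl
          intro i _
          rw [← Finset.mul_sum]
          congr 1
          rw [← finsum_eq_range (fun j hj => by rw [hJ i j hj, Nat.mul_zero])]
          exact hd.2.2 i
      _ = n := by
          rw [← finsum_eq_range (fun i hi => by rw [hI i hi, Nat.mul_zero])]
          exact hms

lemma unDig_dig {ℓ n : ℕ} (hl : 2 ≤ ℓ) {m : ℕ → ℕ} (hm : (Function.support m).Finite)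
    (hms : ∑ᶠ i, ℓ ^ i * m i = n) {d : ℕ → ℕ → ℕ} (hd : DigOK ℓ m d) :
    dig ℓ (unDig ℓ d) = d := by
  obtain ⟨I, J, hI, hJ, hIe⟩ := unDig_bounds hm hd
  funext i j
  show unDig ℓ d j / ℓ ^ i % ℓ = d i j
  rw [unDig_eq_range hIe j]
  rw [digits_extract hl i I (fun k => d k j) (fun k => hd.1 k j)]
  by_cases h : i < I
  · rw [if_pos h]
  · rw [if_neg h, hIe i j (by omega)]

noncomputable def digitsEquiv (ℓ n : ℕ) (hl : 2 ≤ ℓ) :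
    {e : ℕ → ℕ // (Function.support e).Finite ∧ ∑ᶠ j, (j + 1) * e j = n} ≃
      Σ m : {m : ℕ → ℕ // (Function.support m).Finite ∧ ∑ᶠ i, ℓ ^ i * m i = n},
        {d : ℕ → ℕ → ℕ // DigOK ℓ m.1 d} where
  toFun e := ⟨⟨msize ℓ e.1,
      (Set.finite_Iio (n + 1)).subset (fun i hi => by
        simp only [Set.mem_Iio]
        by_contra h
        exact hi (msize_support hl e.2.1 e.2.2 i (by omega))),
      msize_sum hl e.2.1 e.2.2⟩,
    ⟨dig ℓ e.1, fun i j => dig_lt hl e.1 i j, dig_support e.2.1, fun i => rfl⟩⟩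
  invFun x := ⟨unDig ℓ x.2.1, (unDig_support x.1.2.1 x.1.2.2 x.2.2).1,
    (unDig_support x.1.2.1 x.1.2.2 x.2.2).2⟩
  left_inv e := Subtype.ext (by
    funext j
    show ∑ᶠ i, ℓ ^ i * dig ℓ e.1 i j = e.1 j
    rw [finsum_eq_range (N := n + 1)
      (fun i hi => by rw [dig_zero_of_large hl e.2.1 e.2.2 hi j, Nat.mul_zero])]
    exact e_eq_digits hl e.2.1 e.2.2 j)
  right_inv x := by
    rcases x with ⟨⟨m, hm, hms⟩, ⟨d, hd⟩⟩
    have h2 : dig ℓ (unDig ℓ d) = d := unDig_dig hl hm hms hd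
    have h1 : msize ℓ (unDig ℓ d) = m := by
      funext i
      show ∑ᶠ j, (j + 1) * dig ℓ (unDig ℓ d) i j = m i
      rw [h2]
      exact hd.2.2 i
    refine Sigma.ext (Subtype.ext h1) ?_
    exact (Subtype.heq_iff_coe_eq (fun d' => by show DigOK ℓ (msize ℓ (unDig ℓ d)) d' ↔ DigOK ℓ m d'; rw [h1])).mpr h2
lemma supp_bound_of_weighted {e : ℕ → ℕ} {n : ℕ} (he : (Function.support e).Finite)
    (hs : ∑ᶠ j, (j + 1) * e j = n) {j : ℕ} (hj : n ≤ j) : e j = 0 := by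
  have h1 : (j + 1) * e j ≤ n := by
    have := term_le_finsum (weighted_support he) j
    rwa [hs] at this
  by_contra hc
  have h2 : j + 1 ≤ (j + 1) * e j := Nat.le_mul_of_pos_right _ (by omega)
  omega

lemma finiteE (ℓ m : ℕ) :
    Finite {e : ℕ → ℕ // (∀ j, e j < ℓ) ∧ (Function.support e).Finite ∧
      ∑ᶠ j, (j + 1) * e j = m} := by
  apply Finite.of_injective
    (f := fun (e : {e : ℕ → ℕ // (∀ j, e j < ℓ) ∧ (Function.support e).Finite ∧
      ∑ᶠ j, (j + 1) * e j = m}) (j : Fin (m + 1)) =>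
      (⟨e.1 j.1, by have := e_le_of_sum e.2.2.1 e.2.2.2 j.1; omega⟩ : Fin (m + 1)))
  intro e1 e2 h
  apply Subtype.ext
  funext j
  by_cases hj : j < m + 1
  · have := congrFun h ⟨j, hj⟩
    simpa using this
  · rw [supp_bound_of_weighted e1.2.2.1 e1.2.2.2 (by omega),
      supp_bound_of_weighted e2.2.2.1 e2.2.2.2 (by omega)]

lemma m_zero {ℓ n : ℕ} (hl : 2 ≤ ℓ) {m : ℕ → ℕ} (hm : (Function.support m).Finite)
    (hms : ∑ᶠ i, ℓ ^ i * m i = n) {i : ℕ} (hi : n + 1 ≤ i) : m i = 0 := by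
  have hsupp : (Function.support (fun i => ℓ ^ i * m i)).Finite :=
    hm.subset (fun i hi => by
      simp only [Function.mem_support] at *
      intro h0; exact hi (by rw [h0, Nat.mul_zero]))
  have h1 : ℓ ^ i * m i ≤ n := hms ▸ term_le_finsum hsupp i
  by_contra hc
  have h2 : ℓ ^ i ≤ ℓ ^ i * m i := Nat.le_mul_of_pos_right _ (by omega)
  have h3 : n < ℓ ^ (n + 1) := n_lt_pow hl
  have h4 : ℓ ^ (n + 1) ≤ ℓ ^ i := Nat.pow_le_pow_right (by omega) hi
  omega

lemma finiteM (ℓ n : ℕ) (hl : 2 ≤ ℓ) :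
    Finite {m : ℕ → ℕ // (Function.support m).Finite ∧ ∑ᶠ i, ℓ ^ i * m i = n} := by
  apply Finite.of_injective
    (f := fun (m : {m : ℕ → ℕ // (Function.support m).Finite ∧ ∑ᶠ i, ℓ ^ i * m i = n})
      (i : Fin (n + 1)) =>
      (⟨m.1 i.1, by
        have hsupp : (Function.support (fun i => ℓ ^ i * m.1 i)).Finite :=
          m.2.1.subset (fun i hi => by
            simp only [Function.mem_support] at *
            intro h0; exact hi (by rw [h0, Nat.mul_zero]))
        have h1 : ℓ ^ i.1 * m.1 i.1 ≤ n := by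
          have := term_le_finsum hsupp i.1
          rwa [m.2.2] at this
        have h2 : m.1 i.1 ≤ ℓ ^ i.1 * m.1 i.1 :=
          Nat.le_mul_of_pos_left _ (pow_pos (by omega) _)
        omega⟩ : Fin (n + 1)))
  intro m1 m2 h
  apply Subtype.ext
  funext i
  by_cases hi : i < n + 1
  · have := congrFun h ⟨i, hi⟩
    simpa using this
  · rw [m_zero hl m1.2.1 m1.2.2 (by omega), m_zero hl m2.2.1 m2.2.2 (by omega)]

noncomputable def dToPi (ℓ n : ℕ) (hl : 2 ≤ ℓ)
    (m : {m : ℕ → ℕ // (Function.support m).Finite ∧ ∑ᶠ i, ℓ ^ i * m i = n}) :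
    {d : ℕ → ℕ → ℕ // DigOK ℓ m.1 d} ≃
      (∀ i : Fin (n + 1), {e : ℕ → ℕ // (∀ j, e j < ℓ) ∧ (Function.support e).Finite ∧
        ∑ᶠ j, (j + 1) * e j = m.1 i.1}) where
  toFun d i := ⟨d.1 i.1, fun j => d.2.1 i.1 j, d.2.2.1 i.1, d.2.2.2 i.1⟩
  invFun F := ⟨fun i => if h : i < n + 1 then (F ⟨i, h⟩).1 else (fun _ => 0), by
    refine ⟨?_, ?_, ?_⟩
    · intro i j
      show (if h : i < n + 1 then (F ⟨i, h⟩).1 else (fun _ => 0)) j < ℓ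
      by_cases h : i < n + 1
      · rw [dif_pos h]; exact (F ⟨i, h⟩).2.1 j
      · rw [dif_neg h]; show 0 < ℓ; omega
    · intro i
      show (Function.support (if h : i < n + 1 then (F ⟨i, h⟩).1 else (fun _ => 0))).Finite
      by_cases h : i < n + 1
      · rw [dif_pos h]; exact (F ⟨i, h⟩).2.2.1
      · rw [dif_neg h]
        convert Set.finite_empty
        exact Function.support_zero
    · intro i
      show ∑ᶠ j, (j + 1) * (if h : i < n + 1 then (F ⟨i, h⟩).1 else (fun _ => 0)) j = m.1 i
      by_cases h : i < n + 1
      · rw [dif_pos h]; exact (F ⟨i, h⟩).2.2.2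
      · rw [dif_neg h]
        rw [m_zero hl m.2.1 m.2.2 (by omega)]
        have hz : (fun j : ℕ => (j + 1) * (fun _ : ℕ => (0:ℕ)) j) = fun _ : ℕ => 0 := by
          funext j; simp
        rw [hz]
        exact finsum_zero⟩
  left_inv d := by
    apply Subtype.ext
    funext i j
    show (if h : i < n + 1 then (d.1 i) else (fun _ => 0)) j = d.1 i j
    by_cases h : i < n + 1
    · rw [dif_pos h]
    · rw [dif_neg h]
      exact (digok_dzero d.2 (m_zero hl m.2.1 m.2.2 (by omega)) j).symm
  right_inv F := by
    funext i
    apply Subtype.ext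
    show (if h : i.1 < n + 1 then (F ⟨i.1, h⟩).1 else (fun _ => 0)) = (F i).1
    rw [dif_pos i.2]

lemma card_E_zero {ℓ : ℕ} (hl : 2 ≤ ℓ) :
    Nat.card {e : ℕ → ℕ // (∀ j, e j < ℓ) ∧ (Function.support e).Finite ∧
      ∑ᶠ j, (j + 1) * e j = 0} = 1 := by
  rw [Nat.card_eq_one_iff_exists]
  have hz : (fun j : ℕ => (j + 1) * (fun _ : ℕ => (0:ℕ)) j) = fun _ : ℕ => 0 := by
    funext j; simp
  refine ⟨⟨fun _ => 0, fun j => by show 0 < ℓ; omega, by simp, by rw [hz]; exact finsum_zero⟩, ?_⟩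
  intro e
  apply Subtype.ext
  funext j
  exact supp_bound_of_weighted e.2.2.1 e.2.2.2 (by omega)

lemma finprod_card_eq (ℓ n : ℕ) (hl : 2 ≤ ℓ)
    (m : {m : ℕ → ℕ // (Function.support m).Finite ∧ ∑ᶠ i, ℓ ^ i * m i = n}) :
    (∏ᶠ i : ℕ, Nat.card {e : ℕ → ℕ // (∀ j, e j < ℓ) ∧ (Function.support e).Finite ∧
        ∑ᶠ j, (j + 1) * e j = m.1 i}) =
      Nat.card {d : ℕ → ℕ → ℕ // DigOK ℓ m.1 d} := by
  have h1 : (∏ᶠ i : ℕ, Nat.card {e : ℕ → ℕ // (∀ j, e j < ℓ) ∧ (Function.support e).Finite ∧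
      ∑ᶠ j, (j + 1) * e j = m.1 i}) =
      ∏ i ∈ Finset.range (n + 1), Nat.card {e : ℕ → ℕ // (∀ j, e j < ℓ) ∧
        (Function.support e).Finite ∧ ∑ᶠ j, (j + 1) * e j = m.1 i} := by
    apply finprod_eq_prod_of_mulSupport_subset
    intro i hi
    simp only [Finset.coe_range, Set.mem_Iio]
    by_contra hc
    apply hi
    show Nat.card _ = 1
    rw [m_zero hl m.2.1 m.2.2 (by omega)]
    exact card_E_zero hl
  rw [h1, ← Fin.prod_univ_eq_prod_range, ← Nat.card_pi]
  exact Nat.card_congr (dToPi ℓ n hl m).symm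
lemma main_aux (ℓ n : ℕ) (hl : 2 ≤ ℓ) :
    Nat.card {f : ℕ → ℕ // IsPartition n f} =
      ∑ᶠ m : {m : ℕ → ℕ // (Function.support m).Finite ∧ ∑ᶠ i, ℓ ^ i * m i = n},
        ∏ᶠ i : ℕ, Nat.card {f : ℕ → ℕ //
          IsPartition (m.1 i) f ∧ IsRegularPartition ℓ f} := by
  haveI hM : Finite {m : ℕ → ℕ // (Function.support m).Finite ∧ ∑ᶠ i, ℓ ^ i * m i = n} :=
    finiteM ℓ n hl
  haveI hD : ∀ m : {m : ℕ → ℕ // (Function.support m).Finite ∧ ∑ᶠ i, ℓ ^ i * m i = n},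
      Finite {d : ℕ → ℕ → ℕ // DigOK ℓ m.1 d} := by
    intro m
    haveI : ∀ i : Fin (n + 1), Finite {e : ℕ → ℕ // (∀ j, e j < ℓ) ∧
        (Function.support e).Finite ∧ ∑ᶠ j, (j + 1) * e j = m.1 i.1} :=
      fun i => finiteE ℓ (m.1 i.1)
    exact Finite.of_equiv _ (dToPi ℓ n hl m).symm
  letI := Fintype.ofFinite {m : ℕ → ℕ // (Function.support m).Finite ∧ ∑ᶠ i, ℓ ^ i * m i = n}
  letI : ∀ m : {m : ℕ → ℕ // (Function.support m).Finite ∧ ∑ᶠ i, ℓ ^ i * m i = n},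
      Fintype {d : ℕ → ℕ → ℕ // DigOK ℓ m.1 d} := fun m => Fintype.ofFinite _
  calc Nat.card {f : ℕ → ℕ // IsPartition n f}
      = Nat.card (Σ m : {m : ℕ → ℕ // (Function.support m).Finite ∧ ∑ᶠ i, ℓ ^ i * m i = n},
          {d : ℕ → ℕ → ℕ // DigOK ℓ m.1 d}) :=
        Nat.card_congr ((partEquiv n).trans (digitsEquiv ℓ n hl))
    _ = ∑ m : {m : ℕ → ℕ // (Function.support m).Finite ∧ ∑ᶠ i, ℓ ^ i * m i = n},
          Nat.card {d : ℕ → ℕ → ℕ // DigOK ℓ m.1 d} := by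
        rw [Nat.card_eq_fintype_card, Fintype.card_sigma]
        exact Finset.sum_congr rfl (fun m _ => (Nat.card_eq_fintype_card).symm)
    _ = ∑ᶠ m : {m : ℕ → ℕ // (Function.support m).Finite ∧ ∑ᶠ i, ℓ ^ i * m i = n},
          Nat.card {d : ℕ → ℕ → ℕ // DigOK ℓ m.1 d} := (finsum_eq_sum_of_fintype _).symm
    _ = ∑ᶠ m : {m : ℕ → ℕ // (Function.support m).Finite ∧ ∑ᶠ i, ℓ ^ i * m i = n},
          ∏ᶠ i : ℕ, Nat.card {f : ℕ → ℕ //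
            IsPartition (m.1 i) f ∧ IsRegularPartition ℓ f} := by
        apply finsum_congr
        intro m
        rw [← finprod_card_eq ℓ n hl m]
        apply finprod_congr
        intro i
        exact Nat.card_congr (regEquiv ℓ (m.1 i)).symm


/-- The number of partitions of `n` equals
`Σ_{ν ∈ Part(n,ℓ)} ∏_{i≥0} p_ℓ(m_{ℓ^i}(ν))`, where `p_ℓ(m)` is the number of
`ℓ`-regular partitions of `m`. -/
theorem card_partitions_eq_sum_prod (ℓ n : ℕ) (hℓ : ℓ.Prime) :
    Nat.card {f : ℕ → ℕ // IsPartition n f} =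
      ∑ᶠ ν : {g : ℕ → ℕ // IsPartition n g ∧ PartsPowersOf ℓ g},
        ∏ᶠ i : ℕ,
          Nat.card {f : ℕ → ℕ //
            IsPartition (pmult ν.1 (ℓ ^ i)) f ∧ IsRegularPartition ℓ f} := by
  have hl : 2 ≤ ℓ := hℓ.two_le
  rw [main_aux ℓ n hl,
    ← finsum_comp_equiv (powersEquiv ℓ n hl)
      (f := fun m : {m : ℕ → ℕ // (Function.support m).Finite ∧ ∑ᶠ i, ℓ ^ i * m i = n} =>
        ∏ᶠ i : ℕ, Nat.card {f : ℕ → ℕ //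
          IsPartition (m.1 i) f ∧ IsRegularPartition ℓ f})]
  exact finsum_congr (fun ν => rfl)
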